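/- Let λ, μ > 0, z > 0, x ∈ ℝ, y ≠ 0, 0 ≤ t ≤ T, and set δ = √( (μ−λ)² + 4 μ λ z ), Ã = [[λ, −μ z/y], [−λ y, μ]], and σ⁺ = [[0,1],[0,0]]. Then μ (z/y) · e^{(λ+μ)T/2} · (1, 1) · exp(−Ã (T−t)) · σ⁺ · exp(−Ã t) · (1, xy)ᵀ = z μ [ cosh(δ(T−t)/2) + ((2 y λ + μ − λ)/δ) sinh(δ(T−t)/2) ] · [ x cosh(δt/2) + ((2 λ − x(μ−λ))/δ) sinh(δt/2) ]. -/

import Mathlib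

open Matrix NormedSpace
open scoped Nat

set_option maxHeartbeats 1000000

noncomputable section

/-- exp of an element whose square is `c² • 1`. -/
lemma exp_of_sq {M : Matrix (Fin 2) (Fin 2) ℝ} {c : ℝ} (hc : c ≠ 0)
    (h : M * M = (c ^ 2) • (1 : Matrix (Fin 2) (Fin 2) ℝ)) :
    exp M = Real.cosh c • (1 : Matrix (Fin 2) (Fin 2) ℝ) + (Real.sinh c / c) • M := by
  rw [exp_eq_tsum ℝ]
  refine HasSum.tsum_eq ?_
  have hpow : ∀ n : ℕ, M ^ (2 * n) = (c ^ (2 * n)) • (1 : Matrix (Fin 2) (Fin 2) ℝ) := by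
    intro n
    rw [pow_mul, sq, h, smul_pow, one_pow, ← pow_mul]
  have heven : HasSum (fun n : ℕ => ((2 * n)! : ℝ)⁻¹ • M ^ (2 * n))
      (Real.cosh c • (1 : Matrix (Fin 2) (Fin 2) ℝ)) := by
    have := (Real.hasSum_cosh c).smul_const (1 : Matrix (Fin 2) (Fin 2) ℝ)
    convert this using 2 with n
    rw [hpow, smul_smul]
    congr 1
    field_simp
  have hodd : HasSum (fun n : ℕ => ((2 * n + 1)! : ℝ)⁻¹ • M ^ (2 * n + 1))
      ((Real.sinh c / c) • M) := by
    have := ((Real.hasSum_sinh c).div_const c).smul_const M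
    convert this using 2 with n
    rw [pow_succ, hpow, smul_mul_assoc, one_mul, smul_smul]
    congr 1
    rw [pow_succ]
    field_simp
  exact (heven.even_add_odd hodd)

lemma exp_smul_one (r : ℝ) :
    exp (r • (1 : Matrix (Fin 2) (Fin 2) ℝ)) =
      Real.exp r • (1 : Matrix (Fin 2) (Fin 2) ℝ) := by
  have h1 : r • (1 : Matrix (Fin 2) (Fin 2) ℝ) = diagonal (fun _ => r) := by
    ext i j
    fin_cases i <;> fin_cases j <;> simp [diagonal]
  have h2 : Real.exp r • (1 : Matrix (Fin 2) (Fin 2) ℝ) =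
      diagonal (fun _ => Real.exp r) := by
    ext i j
    fin_cases i <;> fin_cases j <;> simp [diagonal]
  rw [h1, h2, Matrix.exp_diagonal]
  congr 1
  funext i
  simp [Pi.exp_def, ← Real.exp_eq_exp_ℝ]

lemma exp_closed (lam mu z y δ : ℝ) (hy : y ≠ 0) (hδ : 0 < δ)
    (hδ2 : δ ^ 2 = (mu - lam) ^ 2 + 4 * mu * lam * z) (s : ℝ) :
    exp (-(s • !![lam, -(mu * z / y); -(lam * y), mu])) =
      Real.exp (-(s * (lam + mu) / 2)) •
        !![Real.cosh (δ * s / 2) - 2 * Real.sinh (δ * s / 2) / δ * ((lam - mu) / 2),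
            2 * Real.sinh (δ * s / 2) / δ * (mu * z / y);
            2 * Real.sinh (δ * s / 2) / δ * (lam * y),
            Real.cosh (δ * s / 2) + 2 * Real.sinh (δ * s / 2) / δ * ((lam - mu) / 2)] := by
  set N : Matrix (Fin 2) (Fin 2) ℝ :=
    !![(lam - mu) / 2, -(mu * z / y); -(lam * y), (mu - lam) / 2] with hN
  have hsplit : -(s • !![lam, -(mu * z / y); -(lam * y), mu]) =
      (-(s * (lam + mu) / 2)) • (1 : Matrix (Fin 2) (Fin 2) ℝ) + (-s) • N := by
    ext i j
    fin_cases i <;> fin_cases j <;>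
      simp [hN, Matrix.one_apply] <;> ring
  have hcomm : Commute ((-(s * (lam + mu) / 2)) • (1 : Matrix (Fin 2) (Fin 2) ℝ)) ((-s) • N) :=
    ((Commute.one_left ((-s) • N)).smul_left _)
  have hexpN : exp ((-s) • N) =
      Real.cosh (δ * s / 2) • (1 : Matrix (Fin 2) (Fin 2) ℝ) +
        (-(2 * Real.sinh (δ * s / 2) / δ)) • N := by
    rcases eq_or_ne s 0 with rfl | hs
    · simp
    · have hc : s * δ / 2 ≠ 0 :=
        div_ne_zero (mul_ne_zero hs hδ.ne') two_ne_zero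
      have hsq : ((-s) • N) * ((-s) • N) =
          ((s * δ / 2) ^ 2) • (1 : Matrix (Fin 2) (Fin 2) ℝ) := by
        ext i j
        fin_cases i <;> fin_cases j <;>
          · simp [hN, Matrix.mul_apply, Fin.sum_univ_two, Matrix.one_apply]
            field_simp
            first
            | linear_combination (-(4 * y * s ^ 2)) * hδ2
            | (ring_nf; linear_combination -hδ2)
            | ring
      rw [exp_of_sq hc hsq]
      have harg : s * δ / 2 = δ * s / 2 := by ring
      rw [harg]
      congr 1
      rw [smul_smul]
      congr 1
      field_simp
  rw [hsplit, Matrix.exp_add_of_commute _ _ hcomm, exp_smul_one, hexpN, Matrix.smul_mul, one_mul]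
  congr 1
  ext i j
  fin_cases i <;> fin_cases j <;> simp [hN, Matrix.one_apply] <;> ring


/-- Closed form of the per-atom matrix element
`μ y⁻¹ z (1,1) e^{−Ã(T−t)} σ⁺ e^{−Ã t} (1,xy)ᵀ` giving the conditional radiation
intensity at an intermediate time `t`. -/
theorem stmt_17 (lam mu z x y t T : ℝ) (hlam : 0 < lam) (hmu : 0 < mu) (hz : 0 < z)
    (hy : y ≠ 0) (ht0 : 0 ≤ t) (htT : t ≤ T)
    (δ : ℝ) (hδ : δ = Real.sqrt ((mu - lam) ^ 2 + 4 * mu * lam * z))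
    (A : Matrix (Fin 2) (Fin 2) ℝ) (hA : A = !![lam, -(mu * z / y); -(lam * y), mu])
    (σplus : Matrix (Fin 2) (Fin 2) ℝ) (hσ : σplus = !![0, 1; 0, 0]) :
    mu * (z / y) * Real.exp ((lam + mu) * T / 2) *
      (![1, 1] ⬝ᵥ
        (NormedSpace.exp (-((T - t) • A)) * σplus *
          NormedSpace.exp (-(t • A))).mulVec ![1, x * y]) =
    z * mu *
      (Real.cosh (δ * (T - t) / 2) +
        (2 * y * lam + mu - lam) / δ * Real.sinh (δ * (T - t) / 2)) *
      (x * Real.cosh (δ * t / 2) +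
        (2 * lam - x * (mu - lam)) / δ * Real.sinh (δ * t / 2)) := by
  have harg : 0 < (mu - lam) ^ 2 + 4 * mu * lam * z := by positivity
  have hδpos : 0 < δ := hδ ▸ Real.sqrt_pos.mpr harg
  have hδ2 : δ ^ 2 = (mu - lam) ^ 2 + 4 * mu * lam * z := by
    rw [hδ]; exact Real.sq_sqrt harg.le
  subst hA hσ
  rw [exp_closed lam mu z y δ hy hδpos hδ2 (T - t), exp_closed lam mu z y δ hy hδpos hδ2 t,
    Matrix.smul_mul, Matrix.smul_mul, Matrix.mul_smul, Matrix.smul_mulVec,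
    Matrix.smul_mulVec, dotProduct_smul, dotProduct_smul]
  simp only [smul_eq_mul]
  set M1 : Matrix (Fin 2) (Fin 2) ℝ :=
    !![Real.cosh (δ * (T - t) / 2) - 2 * Real.sinh (δ * (T - t) / 2) / δ * ((lam - mu) / 2),
        2 * Real.sinh (δ * (T - t) / 2) / δ * (mu * z / y);
        2 * Real.sinh (δ * (T - t) / 2) / δ * (lam * y),
        Real.cosh (δ * (T - t) / 2) + 2 * Real.sinh (δ * (T - t) / 2) / δ * ((lam - mu) / 2)]
    with hM1
  set M2 : Matrix (Fin 2) (Fin 2) ℝ :=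
    !![Real.cosh (δ * t / 2) - 2 * Real.sinh (δ * t / 2) / δ * ((lam - mu) / 2),
        2 * Real.sinh (δ * t / 2) / δ * (mu * z / y);
        2 * Real.sinh (δ * t / 2) / δ * (lam * y),
        Real.cosh (δ * t / 2) + 2 * Real.sinh (δ * t / 2) / δ * ((lam - mu) / 2)]
    with hM2
  have hprod : Real.exp ((lam + mu) * T / 2) *
      (Real.exp (-((T - t) * (lam + mu) / 2)) * Real.exp (-(t * (lam + mu) / 2))) = 1 := by
    rw [← Real.exp_add, ← Real.exp_add,
      show (lam + mu) * T / 2 + (-((T - t) * (lam + mu) / 2) + -(t * (lam + mu) / 2)) = 0 by ring,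
      Real.exp_zero]
  have hS : mu * (z / y) *
      (![1, 1] ⬝ᵥ (M1 * !![0, 1; 0, 0] * M2).mulVec ![1, x * y]) =
      z * mu *
        (Real.cosh (δ * (T - t) / 2) +
          (2 * y * lam + mu - lam) / δ * Real.sinh (δ * (T - t) / 2)) *
        (x * Real.cosh (δ * t / 2) +
          (2 * lam - x * (mu - lam)) / δ * Real.sinh (δ * t / 2)) := by
    simp [hM1, hM2, Matrix.mul_apply, Matrix.mulVec, dotProduct, Fin.sum_univ_two]
    field_simp
    ring
  linear_combination
    (mu * (z / y) * (![1, 1] ⬝ᵥ (M1 * !![0, 1; 0, 0] * M2).mulVec ![1, x * y])) * hprod + hS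

end
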